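/- Let T be a bounded self-adjoint positive operator on a complex Hilbert space, let λ > 0, and let r ∈ (0, 1]. Let T^r denote the r-th power of T defined by the continuous functional calculus. Then ‖λ (T + λI)⁻¹ T^r‖ ≤ λ^r; equivalently, ‖(I − T(T + λI)⁻¹) T^r‖ ≤ λ^r. -/

import Mathlib

open scoped ComplexOrder

/-- Bias bound under a source condition: for a bounded positive self-adjoint operator `T`,
`λ > 0` and `r ∈ (0,1]`, with `T^r` given by the continuous functional calculus,
one has `‖λ(T + λI)⁻¹ T^r‖ ≤ λ^r`, equivalently `‖(I − T(T + λI)⁻¹) T^r‖ ≤ λ^r`. -/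
theorem stmt5 {H : Type*} [NormedAddCommGroup H] [InnerProductSpace ℂ H] [CompleteSpace H]
    (T : H →L[ℂ] H) (hT : IsSelfAdjoint T)
    (hpos : ∀ f : H, 0 ≤ (inner ℂ (T f) f : ℂ))
    (lam r : ℝ) (hlam : 0 < lam) (hr : 0 < r) (hr1 : r ≤ 1) :
    ‖(lam : ℂ) • ((Ring.inverse (T + (lam : ℂ) • (1 : H →L[ℂ] H))).comp
        (cfc (fun x : ℝ => x ^ r) T))‖ ≤ lam ^ r ∧
    ‖((1 : H →L[ℂ] H) - T.comp (Ring.inverse (T + (lam : ℂ) • (1 : H →L[ℂ] H)))).comp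
        (cfc (fun x : ℝ => x ^ r) T)‖ ≤ lam ^ r := by
  -- T is nonneg in the Loewner order
  have hTpos : (0 : H →L[ℂ] H) ≤ T := by
    rw [ContinuousLinearMap.nonneg_iff_isPositive]
    refine ⟨hT.isSymmetric, fun x => ?_⟩
    have h := hpos x
    rw [Complex.le_def] at h
    simpa [ContinuousLinearMap.reApplyInnerSelf] using h.1
  have hσ : ∀ x ∈ spectrum ℝ T, 0 ≤ x := fun x hx => spectrum_nonneg_of_nonneg hTpos hx
  have hnz : ∀ x ∈ spectrum ℝ T, x + lam ≠ 0 := fun x hx =>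
    ne_of_gt (by linarith [hσ x hx])
  have hcont_inv : ContinuousOn (fun x : ℝ => (x + lam)⁻¹) (spectrum ℝ T) :=
    (ContinuousOn.add continuousOn_id continuousOn_const).inv₀ hnz
  have hcont_pow : ContinuousOn (fun x : ℝ => x ^ r) (spectrum ℝ T) :=
    fun x _ => (Real.continuousAt_rpow_const x r (Or.inr hr.le)).continuousWithinAt
  -- identify T + lam • 1 with a cfc
  have h1 : T + (lam : ℂ) • (1 : H →L[ℂ] H) = cfc (fun x : ℝ => x + lam) T := by
    rw [cfc_add_const lam (fun x : ℝ => x) T, cfc_id' ℝ T, Algebra.algebraMap_eq_smul_one,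
      Complex.coe_smul]
  have hu : IsUnit (T + (lam : ℂ) • (1 : H →L[ℂ] H)) := by
    rw [h1]
    exact isUnit_cfc_iff (fun x : ℝ => x + lam) T |>.mpr hnz
  have hinv : Ring.inverse (T + (lam : ℂ) • (1 : H →L[ℂ] H))
      = cfc (fun x : ℝ => (x + lam)⁻¹) T := by
    rw [h1, ← cfc_inv _ T hnz]
  -- the first operator as a single cfc
  have e1 : (lam : ℂ) • ((Ring.inverse (T + (lam : ℂ) • (1 : H →L[ℂ] H))).comp
      (cfc (fun x : ℝ => x ^ r) T))
      = cfc (fun x : ℝ => lam * ((x + lam)⁻¹ * x ^ r)) T := by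
    rw [hinv]
    rw [show (cfc (fun x : ℝ => (x + lam)⁻¹) T).comp (cfc (fun x : ℝ => x ^ r) T)
      = cfc (fun x : ℝ => (x + lam)⁻¹) T * cfc (fun x : ℝ => x ^ r) T from rfl]
    rw [← cfc_mul _ _ T hcont_inv hcont_pow, Complex.coe_smul,
      ← cfc_smul lam (fun x : ℝ => (x + lam)⁻¹ * x ^ r) T (hcont_inv.mul hcont_pow)]
    simp [smul_eq_mul]
  -- the pointwise bound
  have key : ∀ x ∈ spectrum ℝ T, ‖lam * ((x + lam)⁻¹ * x ^ r)‖ ≤ lam ^ r := by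
    intro x hx
    have hx0 := hσ x hx
    have hxl : 0 < x + lam := by linarith
    have hval : lam * ((x + lam)⁻¹ * x ^ r) = lam * x ^ r / (x + lam) := by ring
    rw [hval, Real.norm_of_nonneg (by positivity), div_le_iff₀ hxl]
    have amgm : lam ^ (1 - r) * x ^ r ≤ (1 - r) * lam + r * x :=
      Real.geom_mean_le_arith_mean2_weighted (by linarith) hr.le hlam.le hx0 (by ring)
    have hsplit : lam * x ^ r = lam ^ r * (lam ^ (1 - r) * x ^ r) := by
      rw [← mul_assoc, ← Real.rpow_add hlam]
      norm_num
    rw [hsplit]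
    calc lam ^ r * (lam ^ (1 - r) * x ^ r) ≤ lam ^ r * ((1 - r) * lam + r * x) :=
          mul_le_mul_of_nonneg_left amgm (Real.rpow_nonneg hlam.le r)
      _ ≤ lam ^ r * (x + lam) := by
          have h1 : (1 - r) * lam ≤ lam := by nlinarith
          have h2 : r * x ≤ x := by nlinarith
          have : (0:ℝ) ≤ lam ^ r := Real.rpow_nonneg hlam.le r
          nlinarith
  have hb1 : ‖cfc (fun x : ℝ => lam * ((x + lam)⁻¹ * x ^ r)) T‖ ≤ lam ^ r :=
    norm_cfc_le (Real.rpow_nonneg hlam.le r) key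
  refine ⟨e1 ▸ hb1, ?_⟩
  -- second operator equals the first
  have e2 : (1 : H →L[ℂ] H) - T.comp (Ring.inverse (T + (lam : ℂ) • (1 : H →L[ℂ] H)))
      = (lam : ℂ) • Ring.inverse (T + (lam : ℂ) • (1 : H →L[ℂ] H)) := by
    have hmul : (T + (lam : ℂ) • (1 : H →L[ℂ] H))
        * Ring.inverse (T + (lam : ℂ) • (1 : H →L[ℂ] H)) = 1 :=
      Ring.mul_inverse_cancel _ hu
    rw [add_mul, smul_mul_assoc, one_mul] at hmul
    rw [show T.comp (Ring.inverse (T + (lam : ℂ) • (1 : H →L[ℂ] H)))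
      = T * Ring.inverse (T + (lam : ℂ) • (1 : H →L[ℂ] H)) from rfl]
    exact (eq_sub_of_add_eq' hmul).symm
  rw [e2, show ((lam : ℂ) • Ring.inverse (T + (lam : ℂ) • (1 : H →L[ℂ] H))).comp
      (cfc (fun x : ℝ => x ^ r) T)
    = (lam : ℂ) • ((Ring.inverse (T + (lam : ℂ) • (1 : H →L[ℂ] H))).comp
      (cfc (fun x : ℝ => x ^ r) T)) from smul_mul_assoc _ _ _, e1]
  exact hb1
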